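/- Let C = {c₁ < c₂ < ... < c_m} be candidate points on the real line and I a finite family of closed intervals each containing more than f points of C. For indices i ≤ j let C_{i,j} = {c_i,...,c_j}, let I_{i,j} be the intervals of I all of whose candidate points lie in C_{i,j}, and let δ_{i,j}(f) be the maximum over failing sets J ⊆ C_{i,j} with |J| ≤ f of the maximum size of a (C_{i,j}\J)-disjoint subfamily of I_{i,j}. Then a subset T ⊆ C is an f-tolerant hitting set of I (i.e., for every J ⊆ C with |J| ≤ f there exists R ⊆ C\J with |(T\J) ∪ R| ≤ |T| such that (T\J) ∪ R hits I) if and only if |T ∩ C_{i,j}| ≥ δ_{i,j}(f) for all 1 ≤ i ≤ j ≤ m. -/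

import Mathlib

open Classical

/-- Points hit a family of intervals if every interval contains one of them. -/
def Hits (S : Finset ℝ) (I : Finset (ℝ × ℝ)) : Prop :=
  ∀ s ∈ I, ∃ x ∈ S, x ∈ Set.Icc s.1 s.2

/-- A subfamily is `X`-disjoint: each point of `X` lies in at most one of its intervals. -/
def XDisjoint (X : Finset ℝ) (J' : Finset (ℝ × ℝ)) : Prop :=
  ∀ x ∈ X, ∀ s ∈ J', ∀ s' ∈ J',
    x ∈ Set.Icc s.1 s.2 → x ∈ Set.Icc s'.1 s'.2 → s = s'

/-- The candidates `c_i, ..., c_j`. -/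
noncomputable def Cij {m : ℕ} (c : Fin m → ℝ) (i j : Fin m) : Finset ℝ :=
  (Finset.univ.filter fun t => i ≤ t ∧ t ≤ j).image c

/-- The intervals of `I` all of whose candidate points lie in `C_{i,j}`. -/
noncomputable def Iij {m : ℕ} (c : Fin m → ℝ) (I : Finset (ℝ × ℝ)) (i j : Fin m) :
    Finset (ℝ × ℝ) :=
  I.filter fun s => ∀ t : Fin m, c t ∈ Set.Icc s.1 s.2 → i ≤ t ∧ t ≤ j

/-- `δ_{i,j}(f)`: the maximum, over failing sets `J ⊆ C_{i,j}` with `|J| ≤ f`, of the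
maximum size of a `(C_{i,j} \ J)`-disjoint subfamily of `I_{i,j}`. -/
noncomputable def delta {m : ℕ} (c : Fin m → ℝ) (I : Finset (ℝ × ℝ)) (i j : Fin m)
    (f : ℕ) : ℕ :=
  ((Cij c i j).powerset.filter fun J => J.card ≤ f).sup fun J =>
    ((Iij c I i j).powerset.filter fun J' => XDisjoint (Cij c i j \ J) J').sup Finset.card

/-- `T` is an `f`-tolerant hitting set of `I` over candidate set `C`. -/
def FTolerant (C T : Finset ℝ) (I : Finset (ℝ × ℝ)) (f : ℕ) : Prop :=
  ∀ J ⊆ C, J.card ≤ f → ∃ R ⊆ C \ J, ((T \ J) ∪ R).card ≤ T.card ∧ Hits ((T \ J) ∪ R) I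

/-- Characterization of `f`-tolerant hitting sets via the window demands `δ_{i,j}(f)`. -/
lemma hits_of_greedy (X : Finset ℝ) (I : Finset (ℝ × ℝ))
    (hX : ∀ s ∈ I, ∃ x ∈ X, x ∈ Set.Icc s.1 s.2) (S : Finset ℝ) :
    ∃ R ⊆ X, ∃ D ⊆ I, R.card ≤ D.card ∧ XDisjoint X D ∧
      (∀ s ∈ D, ∀ x ∈ S, x ∉ Set.Icc s.1 s.2) ∧ Hits (S ∪ R) I := by
  classical
  suffices H : ∀ (n : ℕ) (S : Finset ℝ),
      (I.filter fun s => ¬ ∃ x ∈ S, x ∈ Set.Icc s.1 s.2).card ≤ n →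
      ∃ R ⊆ X, ∃ D ⊆ I, R.card ≤ D.card ∧ XDisjoint X D ∧
        (∀ s ∈ D, ∀ x ∈ S, x ∉ Set.Icc s.1 s.2) ∧ Hits (S ∪ R) I by
    exact H _ S le_rfl
  intro n
  induction n with
  | zero =>
    intro S hS
    refine ⟨∅, Finset.empty_subset _, ∅, Finset.empty_subset _, le_rfl, ?_, ?_, ?_⟩
    · intro x hx s hs; simp at hs
    · intro s hs; simp at hs
    · intro s hsI
      have hE : (I.filter fun s => ¬ ∃ x ∈ S, x ∈ Set.Icc s.1 s.2) = ∅ :=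
        Finset.card_eq_zero.mp (Nat.le_antisymm hS (Nat.zero_le _))
      by_contra hno
      push_neg at hno
      have : s ∈ (I.filter fun s => ¬ ∃ x ∈ S, x ∈ Set.Icc s.1 s.2) := by
        refine Finset.mem_filter.mpr ⟨hsI, ?_⟩
        rintro ⟨x, hx, hxs⟩
        exact hno x (Finset.mem_union_left _ hx) hxs
      rw [hE] at this
      exact absurd this (Finset.notMem_empty s)
  | succ n ih =>
    intro S hS
    set U := I.filter fun s => ¬ ∃ x ∈ S, x ∈ Set.Icc s.1 s.2 with hU
    by_cases hUe : U = ∅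
    · refine ⟨∅, Finset.empty_subset _, ∅, Finset.empty_subset _, le_rfl, ?_, ?_, ?_⟩
      · intro x hx s hs; simp at hs
      · intro s hs; simp at hs
      · intro s hsI
        by_contra hno
        push_neg at hno
        have : s ∈ U := by
          refine Finset.mem_filter.mpr ⟨hsI, ?_⟩
          rintro ⟨x, hx, hxs⟩
          exact hno x (Finset.mem_union_left _ hx) hxs
        rw [hUe] at this
        exact absurd this (Finset.notMem_empty s)
    · obtain ⟨s₀, hs₀U, hs₀min⟩ :=
        Finset.exists_min_image U Prod.snd (Finset.nonempty_of_ne_empty hUe)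
      have hs₀I : s₀ ∈ I := (Finset.mem_filter.mp hs₀U).1
      have hs₀unhit : ¬ ∃ x ∈ S, x ∈ Set.Icc s₀.1 s₀.2 := (Finset.mem_filter.mp hs₀U).2
      obtain ⟨x₀, hx₀X, hx₀s⟩ := hX s₀ hs₀I
      set P := X.filter fun x => x ∈ Set.Icc s₀.1 s₀.2 with hP
      have hPne : P.Nonempty := ⟨x₀, Finset.mem_filter.mpr ⟨hx₀X, hx₀s⟩⟩
      set p := P.max' hPne with hp
      have hpP : p ∈ P := P.max'_mem hPne
      have hpX : p ∈ X := (Finset.mem_filter.mp hpP).1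
      have hps₀ : p ∈ Set.Icc s₀.1 s₀.2 := (Finset.mem_filter.mp hpP).2
      -- recurse
      have hstep : (I.filter fun s => ¬ ∃ x ∈ insert p S, x ∈ Set.Icc s.1 s.2).card ≤ n := by
        have hsub : (I.filter fun s => ¬ ∃ x ∈ insert p S, x ∈ Set.Icc s.1 s.2) ⊆
            U.erase s₀ := by
          intro s hs
          obtain ⟨hsI, hsu⟩ := Finset.mem_filter.mp hs
          refine Finset.mem_erase.mpr ⟨?_, Finset.mem_filter.mpr ⟨hsI, ?_⟩⟩
          · rintro rfl
            exact hsu ⟨p, Finset.mem_insert_self _ _, hps₀⟩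
          · rintro ⟨x, hx, hxs⟩
            exact hsu ⟨x, Finset.mem_insert_of_mem hx, hxs⟩
        calc (I.filter fun s => ¬ ∃ x ∈ insert p S, x ∈ Set.Icc s.1 s.2).card
            ≤ (U.erase s₀).card := Finset.card_le_card hsub
          _ = U.card - 1 := Finset.card_erase_of_mem hs₀U
          _ ≤ n := by omega
      obtain ⟨R', hR'X, D', hD'I, hcard', hdisj', hunhit', hhits'⟩ := ih (insert p S) hstep
      have hs₀D' : s₀ ∉ D' := by
        intro h
        exact hunhit' s₀ h p (Finset.mem_insert_self _ _) hps₀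
      refine ⟨insert p R', Finset.insert_subset hpX hR'X, insert s₀ D',
        Finset.insert_subset hs₀I hD'I, ?_, ?_, ?_, ?_⟩
      · calc (insert p R').card ≤ R'.card + 1 := Finset.card_insert_le _ _
          _ ≤ D'.card + 1 := by omega
          _ = (insert s₀ D').card := (Finset.card_insert_of_notMem hs₀D').symm
      · intro x hxX s hs s' hs' hxs hxs'
        have mixed : ∀ d ∈ D', x ∈ Set.Icc s₀.1 s₀.2 → x ∈ Set.Icc d.1 d.2 → False := by
          intro d hd h1 h2
          have hxP : x ∈ P := Finset.mem_filter.mpr ⟨hxX, h1⟩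
          have hxp : x ≤ p := P.le_max' x hxP
          have hdU : d ∈ U := by
            refine Finset.mem_filter.mpr ⟨hD'I hd, ?_⟩
            rintro ⟨y, hy, hys⟩
            exact hunhit' d hd y (Finset.mem_insert_of_mem hy) hys
          have hmin : s₀.2 ≤ d.2 := hs₀min d hdU
          have : p ∈ Set.Icc d.1 d.2 := ⟨le_trans h2.1 hxp, le_trans hps₀.2 hmin⟩
          exact hunhit' d hd p (Finset.mem_insert_self _ _) this
        rcases Finset.mem_insert.mp hs with h | hsD <;>
          rcases Finset.mem_insert.mp hs' with h' | hs'D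
        · rw [h, h']
        · exact (mixed s' hs'D (h ▸ hxs) hxs').elim
        · exact (mixed s hsD (h' ▸ hxs') hxs).elim
        · exact hdisj' x hxX s hsD s' hs'D hxs hxs'
      · intro s hs y hyS hys
        rcases Finset.mem_insert.mp hs with rfl | hsD
        · exact hs₀unhit ⟨y, hyS, hys⟩
        · exact hunhit' s hsD y (Finset.mem_insert_of_mem hyS) hys
      · have : S ∪ insert p R' = insert p S ∪ R' := by
          rw [Finset.union_insert, Finset.insert_union]
        rw [this]
        exact hhits'

lemma cij_subset {m : ℕ} (c : Fin m → ℝ) (i j : Fin m) :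
    Cij c i j ⊆ Finset.univ.image c :=
  Finset.image_subset_image (Finset.filter_subset _ _)

lemma mem_cij {m : ℕ} {c : Fin m → ℝ} {i j : Fin m} {x : ℝ} :
    x ∈ Cij c i j ↔ ∃ t : Fin m, (i ≤ t ∧ t ≤ j) ∧ c t = x := by
  unfold Cij
  simp [Finset.mem_image, Finset.mem_filter]

lemma count_lemma {m f : ℕ} (c : Fin m → ℝ) (hc : StrictMono c) (I : Finset (ℝ × ℝ))
    (T J : Finset ℝ)
    (hw : ∀ i j : Fin m, i ≤ j → delta c I i j f ≤ (T ∩ Cij c i j).card)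
    (hJf : J.card ≤ f)
    (D : Finset (ℝ × ℝ)) (hDI : D ⊆ I)
    (hdisj : XDisjoint (Finset.univ.image c \ J) D)
    (hunhit : ∀ s ∈ D, ∀ x ∈ T \ J, x ∉ Set.Icc s.1 s.2)
    (hcand : ∀ s ∈ D, ∃ t : Fin m, c t ∈ Set.Icc s.1 s.2) :
    D.card ≤ (T ∩ J).card := by
  classical
  set g : ℝ × ℝ → ℕ := fun s => ((T \ J).filter fun x => x < s.1).card with hg
  set V := D.image g with hV
  set fib : ℕ → Finset (ℝ × ℝ) := fun v => D.filter fun s => g s = v with hfib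
  -- key per-fiber windows
  have key : ∀ v ∈ V, ∃ i j : Fin m, i ≤ j ∧
      (fib v).card ≤ (T ∩ J ∩ Cij c i j).card ∧
      (∀ s ∈ fib v, ∀ t : Fin m, c t ∈ Set.Icc s.1 s.2 → i ≤ t ∧ t ≤ j) ∧
      (∃ s ∈ fib v, c i ∈ Set.Icc s.1 s.2) ∧
      (∃ s ∈ fib v, c j ∈ Set.Icc s.1 s.2) := by
    intro v hv
    obtain ⟨s₀, hs₀D, hgs₀⟩ := Finset.mem_image.mp hv
    have hs₀fib : s₀ ∈ fib v := Finset.mem_filter.mpr ⟨hs₀D, hgs₀⟩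
    obtain ⟨t₀, ht₀⟩ := hcand s₀ hs₀D
    set K : Finset (Fin m) :=
      Finset.univ.filter fun t => ∃ s ∈ fib v, c t ∈ Set.Icc s.1 s.2 with hK
    have hKne : K.Nonempty := ⟨t₀, Finset.mem_filter.mpr ⟨Finset.mem_univ _, s₀, hs₀fib, ht₀⟩⟩
    set i := K.min' hKne with hi
    set j := K.max' hKne with hj
    have hiK : i ∈ K := K.min'_mem hKne
    have hjK : j ∈ K := K.max'_mem hKne
    obtain ⟨s₁, hs₁fib, hs₁c⟩ := (Finset.mem_filter.mp hiK).2
    obtain ⟨s₂, hs₂fib, hs₂c⟩ := (Finset.mem_filter.mp hjK).2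
    have hcont : ∀ s ∈ fib v, ∀ t : Fin m, c t ∈ Set.Icc s.1 s.2 → i ≤ t ∧ t ≤ j := by
      intro s hs t ht
      have htK : t ∈ K := Finset.mem_filter.mpr ⟨Finset.mem_univ _, s, hs, ht⟩
      exact ⟨K.min'_le t htK, K.le_max' t htK⟩
    have hij : i ≤ j := K.min'_le j hjK
    refine ⟨i, j, hij, ?_, hcont, ⟨s₁, hs₁fib, hs₁c⟩, ⟨s₂, hs₂fib, hs₂c⟩⟩
    -- card bound via delta
    have hfibIij : fib v ⊆ Iij c I i j := by
      intro s hs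
      exact Finset.mem_filter.mpr ⟨hDI (Finset.mem_filter.mp hs).1, hcont s hs⟩
    set J₀ := J ∩ Cij c i j with hJ₀
    have hJ₀mem : J₀ ∈ (Cij c i j).powerset.filter fun J' => J'.card ≤ f :=
      Finset.mem_filter.mpr ⟨Finset.mem_powerset.mpr Finset.inter_subset_right,
        le_trans (Finset.card_le_card Finset.inter_subset_left) hJf⟩
    have hfibmem : fib v ∈ (Iij c I i j).powerset.filter
        fun J' => XDisjoint (Cij c i j \ J₀) J' := by
      refine Finset.mem_filter.mpr ⟨Finset.mem_powerset.mpr hfibIij, ?_⟩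
      intro x hx s hs s' hs' h1 h2
      have hxm := Finset.mem_sdiff.mp hx
      have hxC : x ∈ Finset.univ.image c \ J := by
        refine Finset.mem_sdiff.mpr ⟨cij_subset c i j hxm.1, ?_⟩
        intro hxJ
        exact hxm.2 (Finset.mem_inter.mpr ⟨hxJ, hxm.1⟩)
      exact hdisj x hxC s ((Finset.filter_subset _ _) hs) s'
        ((Finset.filter_subset _ _) hs') h1 h2
    have hd1 : (fib v).card ≤ delta c I i j f := by
      have h2 : (fib v).card ≤
          ((Iij c I i j).powerset.filter fun J' => XDisjoint (Cij c i j \ J₀) J').sup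
            Finset.card := Finset.le_sup hfibmem
      exact le_trans h2 (Finset.le_sup (f := fun J' =>
        ((Iij c I i j).powerset.filter fun J'' => XDisjoint (Cij c i j \ J') J'').sup
          Finset.card) hJ₀mem)
    have hd2 := hw i j hij
    -- T ∩ Cij ⊆ J
    have hTJ : T ∩ Cij c i j ⊆ T ∩ J ∩ Cij c i j := by
      intro x hx
      obtain ⟨hxT, hxCij⟩ := Finset.mem_inter.mp hx
      by_contra hxn
      have hxJ : x ∉ J := by
        intro h
        exact hxn (Finset.mem_inter.mpr ⟨Finset.mem_inter.mpr ⟨hxT, h⟩, hxCij⟩)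
      have hxTJ : x ∈ T \ J := Finset.mem_sdiff.mpr ⟨hxT, hxJ⟩
      obtain ⟨t, ⟨hit, htj⟩, hct⟩ := mem_cij.mp hxCij
      have hcix : c i ≤ x := hct ▸ hc.monotone hit
      have hxcj : x ≤ c j := hct ▸ hc.monotone htj
      -- x avoids s₁ and s₂
      have hxs₁ : x ∉ Set.Icc s₁.1 s₁.2 := hunhit s₁ (Finset.mem_filter.mp hs₁fib).1 x hxTJ
      have hxs₂ : x ∉ Set.Icc s₂.1 s₂.2 := hunhit s₂ (Finset.mem_filter.mp hs₂fib).1 x hxTJ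
      have hx1 : s₁.2 < x := by
        by_contra h
        push_neg at h
        exact hxs₁ ⟨le_trans hs₁c.1 hcix, h⟩
      have hx2 : x < s₂.1 := by
        by_contra h
        push_neg at h
        exact hxs₂ ⟨h, le_trans hxcj hs₂c.2⟩
      -- F s₁ ⊊ F s₂
      have hsub : ((T \ J).filter fun y => y < s₁.1) ⊆ ((T \ J).filter fun y => y < s₂.1) := by
        intro y hy
        obtain ⟨hy1, hy2⟩ := Finset.mem_filter.mp hy
        refine Finset.mem_filter.mpr ⟨hy1, ?_⟩
        calc y < s₁.1 := hy2
          _ ≤ c i := hs₁c.1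
          _ ≤ x := hcix
          _ < s₂.1 := hx2
      have hxmem : x ∈ (T \ J).filter fun y => y < s₂.1 :=
        Finset.mem_filter.mpr ⟨hxTJ, hx2⟩
      have hxnmem : x ∉ (T \ J).filter fun y => y < s₁.1 := by
        intro h
        have := (Finset.mem_filter.mp h).2
        have h1 : s₁.1 ≤ s₁.2 := le_trans hs₁c.1 hs₁c.2
        linarith
      have hlt : g s₁ < g s₂ :=
        Finset.card_lt_card (Finset.ssubset_iff_of_subset hsub |>.mpr
          ⟨x, hxmem, hxnmem⟩)
      have hgeq : g s₁ = g s₂ := by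
        rw [(Finset.mem_filter.mp hs₁fib).2, (Finset.mem_filter.mp hs₂fib).2]
      omega
    calc (fib v).card ≤ delta c I i j f := hd1
      _ ≤ (T ∩ Cij c i j).card := hd2
      _ ≤ (T ∩ J ∩ Cij c i j).card := Finset.card_le_card hTJ
  choose wi wj hij hcard hcont hach1 hach2 using key
  -- order across fibers
  have hord : ∀ (v : ℕ) (hv : v ∈ V) (v' : ℕ) (hv' : v' ∈ V), v < v' →
      (wj v hv) < (wi v' hv') := by
    intro v hv v' hv' hlt
    obtain ⟨s₁, hs₁fib, hs₁c⟩ := hach2 v hv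
    obtain ⟨s₂, hs₂fib, hs₂c⟩ := hach1 v' hv'
    have hg1 : g s₁ = v := (Finset.mem_filter.mp hs₁fib).2
    have hg2 : g s₂ = v' := (Finset.mem_filter.mp hs₂fib).2
    have hnsub : ¬ ((T \ J).filter fun y => y < s₂.1) ⊆ ((T \ J).filter fun y => y < s₁.1) := by
      intro h
      have := Finset.card_le_card h
      simp only [hg] at hg1 hg2
      omega
    obtain ⟨y, hy2, hy1⟩ := Finset.not_subset.mp hnsub
    obtain ⟨hyTJ, hys₂⟩ := Finset.mem_filter.mp hy2
    have hys₁ : ¬ y < s₁.1 := fun h => hy1 (Finset.mem_filter.mpr ⟨hyTJ, h⟩)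
    push_neg at hys₁
    have hyns₁ : y ∉ Set.Icc s₁.1 s₁.2 :=
      hunhit s₁ (Finset.mem_filter.mp hs₁fib).1 y hyTJ
    have hy3 : s₁.2 < y := by
      by_contra h
      push_neg at h
      exact hyns₁ ⟨hys₁, h⟩
    have : c (wj v hv) < c (wi v' hv') := by
      calc c (wj v hv) ≤ s₁.2 := hs₁c.2
        _ < y := hy3
        _ < s₂.1 := hys₂
        _ ≤ c (wi v' hv') := hs₂c.1
    exact hc.lt_iff_lt.mp this
  -- windows are disjoint
  set W : ℕ → Finset ℝ := fun v =>
    if h : v ∈ V then T ∩ J ∩ Cij c (wi v h) (wj v h) else ∅ with hW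
  have hWeq : ∀ (v : ℕ) (hv : v ∈ V), W v = T ∩ J ∩ Cij c (wi v hv) (wj v hv) := by
    intro v hv
    simp only [hW, dif_pos hv]
  have hWdisj : ∀ v ∈ V, ∀ v' ∈ V, v ≠ v' → Disjoint (W v) (W v') := by
    intro v hv v' hv' hne
    rw [hWeq v hv, hWeq v' hv']
    rw [Finset.disjoint_left]
    intro x hx hx'
    obtain ⟨t, ⟨hit, htj⟩, hct⟩ := mem_cij.mp (Finset.mem_inter.mp hx).2
    obtain ⟨t', ⟨hit', htj'⟩, hct'⟩ := mem_cij.mp (Finset.mem_inter.mp hx').2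
    have htt : t = t' := hc.injective (by rw [hct, hct'])
    rcases hne.lt_or_gt with h | h
    · have := hord v hv v' hv' h
      have : t < t' := lt_of_le_of_lt htj (lt_of_lt_of_le this hit')
      omega
    · have := hord v' hv' v hv h
      have : t' < t := lt_of_le_of_lt htj' (lt_of_lt_of_le this hit)
      omega
  have hDsum : D.card = ∑ v ∈ V, (fib v).card :=
    Finset.card_eq_sum_card_fiberwise fun s hs => Finset.mem_image_of_mem g hs
  have hsum2 : ∑ v ∈ V, (fib v).card ≤ ∑ v ∈ V, (W v).card := by
    refine Finset.sum_le_sum fun v hv => ?_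
    rw [hWeq v hv]
    exact hcard v hv
  have hsum3 : ∑ v ∈ V, (W v).card = (V.biUnion W).card :=
    (Finset.card_biUnion hWdisj).symm
  have hsum4 : (V.biUnion W).card ≤ (T ∩ J).card := by
    refine Finset.card_le_card ?_
    intro x hx
    obtain ⟨v, hv, hxW⟩ := Finset.mem_biUnion.mp hx
    rw [hWeq v hv] at hxW
    exact (Finset.mem_inter.mp hxW).1
  omega

theorem fTolerant_iff_window_demands {m f : ℕ} (c : Fin m → ℝ) (hc : StrictMono c)
    (I : Finset (ℝ × ℝ))
    (hbig : ∀ s ∈ I, f < ((Finset.univ.image c).filter fun x => x ∈ Set.Icc s.1 s.2).card)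
    (T : Finset ℝ) (hT : T ⊆ Finset.univ.image c) :
    FTolerant (Finset.univ.image c) T I f ↔
      ∀ i j : Fin m, i ≤ j → delta c I i j f ≤ (T ∩ Cij c i j).card := by
  classical
  constructor
  · intro hFT i j hij
    unfold delta
    apply Finset.sup_le
    intro J hJ
    apply Finset.sup_le
    intro J' hJ'
    obtain ⟨hJC, hJf⟩ := Finset.mem_filter.mp hJ
    rw [Finset.mem_powerset] at hJC
    obtain ⟨hJ'I, hdisj⟩ := Finset.mem_filter.mp hJ'
    rw [Finset.mem_powerset] at hJ'I
    obtain ⟨R, hR, hcard, hhits⟩ := hFT J (hJC.trans (cij_subset c i j)) hJf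
    set H := (T \ J) ∪ R with hH
    -- every interval in J' is hit by a point of H ∩ (Cij \ J)
    have hpick : ∀ s ∈ J', ∃ x, x ∈ H ∩ (Cij c i j \ J) ∧ x ∈ Set.Icc s.1 s.2 := by
      intro s hs
      have hsIij := hJ'I hs
      have hsI : s ∈ I := (Finset.mem_filter.mp hsIij).1
      obtain ⟨x, hxH, hxs⟩ := hhits s hsI
      have hxC : x ∈ Finset.univ.image c := by
        rcases Finset.mem_union.mp hxH with h | h
        · exact hT (Finset.mem_sdiff.mp h).1
        · exact (Finset.mem_sdiff.mp (hR h)).1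
      obtain ⟨t, -, ht⟩ := Finset.mem_image.mp hxC
      have htij := (Finset.mem_filter.mp hsIij).2 t (ht ▸ hxs)
      have hxCij : x ∈ Cij c i j := mem_cij.mpr ⟨t, htij, ht⟩
      have hxJ : x ∉ J := by
        rcases Finset.mem_union.mp hxH with h | h
        · exact (Finset.mem_sdiff.mp h).2
        · exact (Finset.mem_sdiff.mp (hR h)).2
      exact ⟨x, Finset.mem_inter.mpr ⟨hxH, Finset.mem_sdiff.mpr ⟨hxCij, hxJ⟩⟩, hxs⟩
    choose pick hpick1 hpick2 using hpick
    set f₀ : ℝ × ℝ → ℝ := fun s => if h : s ∈ J' then pick s h else 0 with hf₀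
    have hinj : J'.card ≤ (H ∩ (Cij c i j \ J)).card := by
      refine Finset.card_le_card_of_injOn f₀ ?_ ?_
      · intro s hs
        simp only [Finset.mem_coe] at hs ⊢
        simp only [hf₀, dif_pos hs]
        exact hpick1 s hs
      · intro s hs s' hs' heq
        simp only [Finset.mem_coe] at hs hs'
        simp only [hf₀, dif_pos hs, dif_pos hs'] at heq
        have hx1 : pick s hs ∈ Set.Icc s.1 s.2 := hpick2 s hs
        have hx2 : pick s hs ∈ Set.Icc s'.1 s'.2 := heq ▸ hpick2 s' hs'
        exact hdisj (pick s hs) (Finset.mem_inter.mp (hpick1 s hs)).2 s hs s' hs' hx1 hx2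
    -- arithmetic
    set A := H ∩ (Cij c i j \ J) with hA
    have e1 : (A ∩ T).card + (A \ T).card = A.card := Finset.card_inter_add_card_sdiff A T
    have e2 : (H ∩ T).card + (H \ T).card = H.card := Finset.card_inter_add_card_sdiff H T
    have e3 : ((T ∩ Cij c i j) \ J).card + ((T ∩ Cij c i j) ∩ J).card
        = (T ∩ Cij c i j).card := Finset.card_sdiff_add_card_inter _ _
    have e5 : (T \ J).card + (T ∩ J).card = T.card := Finset.card_sdiff_add_card_inter _ _
    have l1 : (A ∩ T).card ≤ ((T ∩ Cij c i j) \ J).card := by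
      refine Finset.card_le_card ?_
      intro x hx
      obtain ⟨hxA, hxT⟩ := Finset.mem_inter.mp hx
      obtain ⟨hxCij, hxJ⟩ := Finset.mem_sdiff.mp (Finset.mem_inter.mp hxA).2
      exact Finset.mem_sdiff.mpr ⟨Finset.mem_inter.mpr ⟨hxT, hxCij⟩, hxJ⟩
    have l2 : (A \ T).card ≤ (H \ T).card :=
      Finset.card_le_card (Finset.sdiff_subset_sdiff Finset.inter_subset_left le_rfl)
    have l3 : (T \ J).card ≤ (H ∩ T).card := by
      refine Finset.card_le_card ?_
      intro x hx
      exact Finset.mem_inter.mpr ⟨Finset.mem_union_left _ hx, (Finset.mem_sdiff.mp hx).1⟩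
    have l5 : (T ∩ J).card ≤ ((T ∩ Cij c i j) ∩ J).card := by
      refine Finset.card_le_card ?_
      intro x hx
      obtain ⟨hxT, hxJ⟩ := Finset.mem_inter.mp hx
      exact Finset.mem_inter.mpr ⟨Finset.mem_inter.mpr ⟨hxT, hJC hxJ⟩, hxJ⟩
    omega
  · intro hw J hJC hJf
    have hXhit : ∀ s ∈ I, ∃ x ∈ Finset.univ.image c \ J, x ∈ Set.Icc s.1 s.2 := by
      intro s hsI
      have hne : (((Finset.univ.image c).filter fun x => x ∈ Set.Icc s.1 s.2) \ J).Nonempty := by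
        rw [Finset.sdiff_nonempty]
        intro hsub
        have := Finset.card_le_card hsub
        have := hbig s hsI
        omega
      obtain ⟨x, hx⟩ := hne
      obtain ⟨hxCs, hxJ⟩ := Finset.mem_sdiff.mp hx
      obtain ⟨hxC, hxs⟩ := Finset.mem_filter.mp hxCs
      exact ⟨x, Finset.mem_sdiff.mpr ⟨hxC, hxJ⟩, hxs⟩
    obtain ⟨R, hRX, D, hDI, hRD, hdisj, hunhit, hhits⟩ :=
      hits_of_greedy (Finset.univ.image c \ J) I hXhit (T \ J)
    refine ⟨R, hRX, ?_, hhits⟩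
    have hcand : ∀ s ∈ D, ∃ t : Fin m, c t ∈ Set.Icc s.1 s.2 := by
      intro s hs
      have := hbig s (hDI hs)
      have hne : ((Finset.univ.image c).filter fun x => x ∈ Set.Icc s.1 s.2).Nonempty := by
        rw [← Finset.card_pos]; omega
      obtain ⟨x, hx⟩ := hne
      obtain ⟨hxC, hxs⟩ := Finset.mem_filter.mp hx
      obtain ⟨t, -, ht⟩ := Finset.mem_image.mp hxC
      exact ⟨t, ht ▸ hxs⟩
    have hDcard : D.card ≤ (T ∩ J).card :=
      count_lemma c hc I T J hw hJf D hDI hdisj hunhit hcand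
    have e5 : (T \ J).card + (T ∩ J).card = T.card := Finset.card_sdiff_add_card_inter _ _
    have := Finset.card_union_le (T \ J) R
    omega
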